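/- arXiv:1307.5764 — 2 statements merged into one kernel-verified Lean document; each statement's English description precedes it below -/
import Mathlib

section
/- Let n ≥ 1 and let M̂ ⊆ S^{n+1} be a convex body in the sphere (a compact convex set with nonempty interior) which does not contain any pair of antipodal points (i.e., there is no p with p ∈ M̂ and −p ∈ M̂). Then M̂ is contained in an open hemisphere: there exists x₀ ∈ S^{n+1} with M̂ ⊆ int ℋ(x₀). -/
open scoped RealInnerProductSpace

noncomputable section

/-- Euclidean space `ℝ^{n+2}`. -/
abbrev Eucl (n : ℕ) : Type := EuclideanSpace ℝ (Fin (n + 2))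

/-- The unit sphere `S^{n+1} ⊆ ℝ^{n+2}`, as a subtype with the subspace topology. -/
abbrev Sphere (n : ℕ) : Type := Metric.sphere (0 : Eucl n) 1

/-- The closed hemisphere centered at `x`. -/
def hemi {n : ℕ} (x : Sphere n) : Set (Sphere n) :=
  {p : Sphere n | 0 ≤ ⟪(p : Eucl n), (x : Eucl n)⟫}

/-- The open hemisphere centered at `x` (the interior of `hemi x`). -/
def openHemi {n : ℕ} (x : Sphere n) : Set (Sphere n) :=
  {p : Sphere n | 0 < ⟪(p : Eucl n), (x : Eucl n)⟫}

/-- The equator `𝒮(x)`. -/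
def equator {n : ℕ} (x : Sphere n) : Set (Sphere n) :=
  {p : Sphere n | ⟪(p : Eucl n), (x : Eucl n)⟫ = 0}

/-- `Γ` is a minimizing geodesic segment from `p` to `q` in the sphere. -/
def IsMinGeodesicSegment {n : ℕ} (p q : Sphere n) (Γ : Set (Sphere n)) : Prop :=
  ∃ v : Eucl n, ‖v‖ = 1 ∧ ⟪v, (p : Eucl n)⟫ = 0 ∧
    Real.cos (Real.arccos ⟪(p : Eucl n), (q : Eucl n)⟫) • (p : Eucl n) +
      Real.sin (Real.arccos ⟪(p : Eucl n), (q : Eucl n)⟫) • v = (q : Eucl n) ∧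
    Γ = {z : Sphere n | ∃ t ∈ Set.Icc (0 : ℝ) (Real.arccos ⟪(p : Eucl n), (q : Eucl n)⟫),
      (z : Eucl n) = Real.cos t • (p : Eucl n) + Real.sin t • v}

/-- A set is weakly convex if any two of its points are joined by some
minimizing geodesic segment contained in the set. -/
def WeaklyConvexSet {n : ℕ} (M : Set (Sphere n)) : Prop :=
  ∀ p ∈ M, ∀ q ∈ M, ∃ Γ : Set (Sphere n), IsMinGeodesicSegment p q Γ ∧ Γ ⊆ M

/-- A set is convex if every minimizing geodesic segment joining two of its points
is contained in the set. -/
def SphConvexSet {n : ℕ} (M : Set (Sphere n)) : Prop :=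
  ∀ p ∈ M, ∀ q ∈ M, ∀ Γ : Set (Sphere n), IsMinGeodesicSegment p q Γ → Γ ⊆ M

/-- Stereographic projection sending `x₀` to `0 ∈ x₀^⊥`. -/
def stereo {n : ℕ} (x₀ : Sphere n) (p : Sphere n) : Eucl n :=
  (2 / (1 + ⟪(p : Eucl n), (x₀ : Eucl n)⟫)) •
    ((p : Eucl n) - ⟪(p : Eucl n), (x₀ : Eucl n)⟫ • (x₀ : Eucl n))

/-- `A` satisfies an interior sphere condition at `p` with respect to `x₀`:
there is a ball (of the hyperplane `x₀^⊥`) inside `stereo x₀ '' A` touching `stereo x₀ p`. -/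
def IntSphereCond {n : ℕ} (x₀ : Sphere n) (A : Set (Sphere n)) (p : Sphere n) : Prop :=
  ∃ c : Eucl n, ⟪c, (x₀ : Eucl n)⟫ = 0 ∧ ∃ ρ : ℝ, 0 < ρ ∧
    {y : Eucl n | ⟪y, (x₀ : Eucl n)⟫ = 0 ∧ dist y c < ρ} ⊆ stereo x₀ '' A ∧
    ‖stereo x₀ p - c‖ = ρ

lemma sphere_norm {n : ℕ} (p : Sphere n) : ‖(p : Eucl n)‖ = 1 :=
  mem_sphere_zero_iff_norm.mp p.2

private lemma aux_pos (a b c : ℝ) (ha : 0 ≤ a) (hb : 0 ≤ b) (hab : 0 < a + b)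
    (hc1 : c ≤ 1) (hc2 : -1 < c) : 0 < a ^ 2 + b ^ 2 + 2 * a * b * c := by
  nlinarith [mul_nonneg (sq_nonneg (a - b)) (by linarith : (0:ℝ) ≤ 1 - c),
    mul_pos (mul_pos hab hab) (by linarith : (0:ℝ) < 1 + c)]

private lemma aux_key (a b c N : ℝ) (ha : 0 ≤ a) (hb : 0 ≤ b)
    (hc1 : c ≤ 1) (hc2 : -1 < c) (hN2 : N ^ 2 = a ^ 2 + b ^ 2 + 2 * a * b * c)
    (hN0 : 0 < N) : c * N ≤ a + b * c := by
  have h1 : N ≤ a + b := by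
    have hs1 : N ^ 2 ≤ (a + b) ^ 2 := by
      nlinarith [mul_nonneg (mul_nonneg ha hb) (by linarith : (0:ℝ) ≤ 1 - c)]
    nlinarith [hs1, hN0.le]
  have h2 : b - a ≤ N := by
    rcases le_or_gt (b - a) 0 with h | h
    · linarith
    · have hs2 : (b - a) ^ 2 ≤ N ^ 2 := by
        nlinarith [mul_nonneg (mul_nonneg ha hb) (by linarith : (0:ℝ) ≤ 1 + c)]
      nlinarith [hs2, hN0.le, h]
  have p1 : (0:ℝ) ≤ (1 + c) * (a + b - N) := mul_nonneg (by linarith) (by linarith)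
  have p2 : (0:ℝ) ≤ (1 - c) * (a - b + N) := mul_nonneg (by linarith) (by linarith)
  nlinarith [p1, p2]

private lemma aux_abs (a b c N U : ℝ) (hU : 0 ≤ U) (hU2 : U ^ 2 = 1 - c ^ 2)
    (hN2 : N ^ 2 = a ^ 2 + b ^ 2 + 2 * a * b * c) (hN0 : 0 < N) :
    -1 ≤ (a + b * c) / N ∧ (a + b * c) / N ≤ 1 := by
  have hsq : (a + b * c) ^ 2 + b ^ 2 * U ^ 2 = N ^ 2 := by rw [hU2, hN2]; ring
  constructor
  · rw [le_div_iff₀ hN0]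
    nlinarith [sq_nonneg (b * U), sq_nonneg (a + b * c + N)]
  · rw [div_le_one hN0]
    nlinarith [sq_nonneg (b * U), sq_nonneg (a + b * c - N)]

private lemma aux_sin (a b c N U : ℝ) (hU2 : U ^ 2 = 1 - c ^ 2)
    (hN2 : N ^ 2 = a ^ 2 + b ^ 2 + 2 * a * b * c) (hN0 : N ≠ 0) :
    1 - ((a + b * c) / N) ^ 2 = (b * U / N) ^ 2 := by
  field_simp
  nlinarith [hU2, hN2]

lemma two_point {n : ℕ} {M : Set (Sphere n)} (hconv : SphConvexSet M)
    {p q : Sphere n} (hp : p ∈ M) (hq : q ∈ M) (hpq : (q : Eucl n) ≠ -(p : Eucl n))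
    {a b : ℝ} (ha : 0 ≤ a) (hb : 0 ≤ b) (hab : 0 < a + b) :
    ∃ r ∈ M, ∃ t : ℝ, 0 < t ∧ a • (p : Eucl n) + b • (q : Eucl n) = t • (r : Eucl n) := by
  have hpn : ‖(p : Eucl n)‖ = 1 := sphere_norm p
  have hqn : ‖(q : Eucl n)‖ = 1 := sphere_norm q
  set c : ℝ := ⟪(p : Eucl n), (q : Eucl n)⟫ with hcdef
  have hc1 : c ≤ 1 := by
    have := real_inner_le_norm (p : Eucl n) (q : Eucl n)
    rw [hpn, hqn] at this; linarith
  have hc2 : -1 < c := by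
    rcases lt_or_ge (-1) c with h | h
    · exact h
    · exfalso
      have hcm : c = -1 := by
        have := abs_real_inner_le_norm (p : Eucl n) (q : Eucl n)
        rw [hpn, hqn] at this
        have := abs_le.mp this
        linarith [this.1]
      have : ‖(p : Eucl n) + (q : Eucl n)‖ ^ 2 = 0 := by
        rw [norm_add_sq_real, hpn, hqn, ← hcdef, hcm]; ring
      have h0 : (p : Eucl n) + (q : Eucl n) = 0 := by
        have := pow_eq_zero_iff (n := 2) (by norm_num) |>.mp this
        exact norm_eq_zero.mp this
      exact hpq (by linear_combination (norm := module) h0)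
  by_cases hqp : (q : Eucl n) = (p : Eucl n)
  · refine ⟨p, hp, a + b, hab, ?_⟩
    rw [hqp, ← add_smul]
  · have hc3 : c < 1 := by
      rcases lt_or_ge c 1 with h | h
      · exact h
      · exfalso
        have hcm : c = 1 := le_antisymm hc1 h
        have : ‖(p : Eucl n) - (q : Eucl n)‖ ^ 2 = 0 := by
          rw [norm_sub_sq_real, hpn, hqn, ← hcdef, hcm]; ring
        have h0 : (p : Eucl n) - (q : Eucl n) = 0 := by
          have := pow_eq_zero_iff (n := 2) (by norm_num) |>.mp this
          exact norm_eq_zero.mp this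
        exact hqp (by linear_combination (norm := module) -h0)
    set u : Eucl n := (q : Eucl n) - c • (p : Eucl n) with hudef
    have hpp : ⟪(p : Eucl n), (p : Eucl n)⟫ = 1 := by
      rw [real_inner_self_eq_norm_sq, hpn]; norm_num
    have hqq : ⟪(q : Eucl n), (q : Eucl n)⟫ = 1 := by
      rw [real_inner_self_eq_norm_sq, hqn]; norm_num
    have hpu : ⟪(p : Eucl n), u⟫ = 0 := by
      rw [hudef, inner_sub_right, real_inner_smul_right, hpp, ← hcdef]; ring
    have hun : ‖u‖ ^ 2 = 1 - c ^ 2 := by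
      rw [hudef, norm_sub_sq_real, hqn, real_inner_smul_right, norm_smul, real_inner_comm,
        ← hcdef, hpn, Real.norm_eq_abs, mul_one, sq_abs]
      ring
    have hune : u ≠ 0 := by
      intro h
      rw [h] at hun; simp at hun; nlinarith
    have hun0 : 0 < ‖u‖ := norm_pos_iff.mpr hune
    set v : Eucl n := ‖u‖⁻¹ • u with hvdef
    have hv : ‖v‖ = 1 := norm_smul_inv_norm hune
    have hvp : ⟪v, (p : Eucl n)⟫ = 0 := by
      rw [hvdef, real_inner_smul_left, real_inner_comm, hpu, mul_zero]
    have hcos : Real.cos (Real.arccos c) = c := Real.cos_arccos hc2.le hc1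
    have hsin : Real.sin (Real.arccos c) = ‖u‖ := by
      rw [Real.sin_arccos, ← hun, Real.sqrt_sq (norm_nonneg u)]
    have hgeo : Real.cos (Real.arccos c) • (p : Eucl n) + Real.sin (Real.arccos c) • v
        = (q : Eucl n) := by
      rw [hcos, hsin, hvdef, smul_smul, mul_inv_cancel₀ (ne_of_gt hun0), one_smul, hudef]
      module
    set Γ : Set (Sphere n) :=
      {z : Sphere n | ∃ t ∈ Set.Icc (0 : ℝ) (Real.arccos c),
        (z : Eucl n) = Real.cos t • (p : Eucl n) + Real.sin t • v} with hΓdef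
    have hΓ : IsMinGeodesicSegment p q Γ := ⟨v, hv, hvp, hgeo, rfl⟩
    have hΓM : Γ ⊆ M := hconv p hp q hq Γ hΓ
    set s : Eucl n := a • (p : Eucl n) + b • (q : Eucl n) with hsdef
    set N : ℝ := ‖s‖ with hNdef
    have hN2 : N ^ 2 = a ^ 2 + b ^ 2 + 2 * a * b * c := by
      rw [hNdef, hsdef, norm_add_sq_real, norm_smul, norm_smul, real_inner_smul_left,
        real_inner_smul_right, hpn, hqn, ← hcdef, Real.norm_eq_abs, Real.norm_eq_abs,
        abs_of_nonneg ha, abs_of_nonneg hb]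
      ring
    have h1c : (0:ℝ) < 1 + c := by linarith
    have hN2pos : 0 < N ^ 2 := by
      rw [hN2]; exact aux_pos a b c ha hb hab hc1 hc2
    have hNne : N ≠ 0 := by intro h; rw [h] at hN2pos; simp at hN2pos
    have hN0 : 0 < N := lt_of_le_of_ne (norm_nonneg s) (Ne.symm hNne)
    have hkey : c * N ≤ a + b * c := aux_key a b c N ha hb hc1 hc2 hN2 hN0
    set α : ℝ := (a + b * c) / N with hαdef
    have hα1 : α ≤ 1 := (aux_abs a b c N ‖u‖ (norm_nonneg u) hun hN2 hN0).2
    have hα2 : -1 ≤ α := (aux_abs a b c N ‖u‖ (norm_nonneg u) hun hN2 hN0).1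
    have hcosα : Real.cos (Real.arccos α) = α := Real.cos_arccos hα2 hα1
    have hsinα : Real.sin (Real.arccos α) = b * ‖u‖ / N := by
      rw [Real.sin_arccos]
      have h : 1 - α ^ 2 = (b * ‖u‖ / N) ^ 2 := by
        rw [hαdef]; exact aux_sin a b c N ‖u‖ hun hN2 hNne
      rw [h, Real.sqrt_sq (by positivity)]
    set z : Eucl n := Real.cos (Real.arccos α) • (p : Eucl n) + Real.sin (Real.arccos α) • v
      with hzdef
    have hzN : z = N⁻¹ • s := by
      rw [hzdef, hcosα, hsinα, hαdef, hvdef, hsdef, hudef]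
      match_scalars
      · have hX : ‖(q : Eucl n) - c • (p : Eucl n)‖ ≠ 0 := hun0.ne'
        field_simp; ring
      · have hX : ‖(q : Eucl n) - c • (p : Eucl n)‖ ≠ 0 := hun0.ne'
        field_simp
    have hznorm : ‖z‖ = 1 := by
      rw [hzN, norm_smul, hNdef, Real.norm_eq_abs, abs_of_pos (by rw [← hNdef]; exact inv_pos.mpr hN0)]
      rw [← hNdef]
      field_simp
    set zs : Sphere n := ⟨z, mem_sphere_zero_iff_norm.mpr hznorm⟩ with hzsdef
    have hzΓ : zs ∈ Γ := by
      refine ⟨Real.arccos α, ⟨Real.arccos_nonneg α, ?_⟩, rfl⟩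
      have hcα : c ≤ α := by rw [hαdef, le_div_iff₀ hN0]; linarith [hkey]
      have := Real.strictAntiOn_arccos
      rcases eq_or_lt_of_le hcα with h | h
      · rw [h]
      · exact le_of_lt (this ⟨hc2.le, hc1⟩ ⟨hα2, hα1⟩ h)
    refine ⟨zs, hΓM hzΓ, N, hN0, ?_⟩
    have : (zs : Eucl n) = N⁻¹ • s := hzN
    rw [this, smul_smul, mul_inv_cancel₀ hNne, one_smul]

lemma sum_point {n : ℕ} {M : Set (Sphere n)} (hconv : SphConvexSet M)
    (hanti : ∀ p ∈ M, ∀ q ∈ M, (q : Eucl n) ≠ -(p : Eucl n))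
    {ι : Type} (s : Finset ι) (w : ι → ℝ) (z : ι → Eucl n)
    (hw : ∀ i ∈ s, 0 ≤ w i) (hz : ∀ i ∈ s, ∃ m ∈ M, (m : Eucl n) = z i)
    (hpos : 0 < ∑ i ∈ s, w i) :
    ∃ r ∈ M, ∃ t : ℝ, 0 < t ∧ ∑ i ∈ s, w i • z i = t • (r : Eucl n) := by
  classical
  induction s using Finset.induction_on with
  | empty => simp at hpos
  | @insert i s hi ih =>
    have hwi : 0 ≤ w i := hw i (Finset.mem_insert_self i s)
    rw [Finset.sum_insert hi] at hpos ⊢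
    obtain ⟨m, hm, hmz⟩ := hz i (Finset.mem_insert_self i s)
    by_cases hs : 0 < ∑ j ∈ s, w j
    · obtain ⟨r', hr', t', ht', heq⟩ := ih (fun j hj => hw j (Finset.mem_insert_of_mem hj))
        (fun j hj => hz j (Finset.mem_insert_of_mem hj)) hs
      rw [heq, ← hmz]
      exact two_point hconv hm hr' (hanti m hm r' hr') hwi ht'.le (by linarith)
    · have hw0 : ∀ j ∈ s, 0 ≤ w j := fun j hj => hw j (Finset.mem_insert_of_mem hj)
      have hsum0 : ∑ j ∈ s, w j = 0 := le_antisymm (not_lt.mp hs) (Finset.sum_nonneg hw0)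
      have hall : ∀ j ∈ s, w j = 0 := (Finset.sum_eq_zero_iff_of_nonneg hw0).mp hsum0
      have hz0 : ∑ j ∈ s, w j • z j = 0 :=
        Finset.sum_eq_zero fun j hj => by rw [hall j hj, zero_smul]
      have hwi' : 0 < w i := by rw [hsum0] at hpos; linarith
      exact ⟨m, hm, w i, hwi', by rw [hz0, add_zero, hmz]⟩

lemma sum_extend_emb {ι : Type*} [Fintype ι] {β : Type*} [AddCommMonoid β] {d : ℕ}
    (e : ι ↪ Fin d) (f : Fin d → β) (hf : ∀ j, (¬ ∃ i, e i = j) → f j = 0) :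
    ∑ j, f j = ∑ i, f (e i) := by
  rw [← Finset.sum_map Finset.univ e f]
  exact (Finset.sum_subset (Finset.subset_univ _) fun j _ hj =>
    hf j (by simpa [Finset.mem_map] using hj)).symm

lemma isCompact_hull {n : ℕ} {s : Set (Eucl n)} (hs : IsCompact s) (hne : s.Nonempty) :
    IsCompact (convexHull ℝ s) := by
  classical
  obtain ⟨p₀, hp₀⟩ := hne
  set d : ℕ := Module.finrank ℝ (Eucl n) + 1 with hd
  have himage : convexHull ℝ s =
      (fun wz : (Fin d → ℝ) × (Fin d → Eucl n) => ∑ i, wz.1 i • wz.2 i) ''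
      (stdSimplex ℝ (Fin d) ×ˢ Set.univ.pi fun _ : Fin d => s) := by
    apply Set.Subset.antisymm
    · intro x hx
      obtain ⟨ι, hfin, z, w, hrange, hindep, hwpos, hwsum, hsum⟩ :=
        eq_pos_convex_span_of_mem_convexHull hx
      have hcard : Fintype.card ι ≤ Fintype.card (Fin d) := by
        rw [Fintype.card_fin, hd]
        exact le_trans hindep.card_le_finrank_succ
          (Nat.add_le_add_right (Submodule.finrank_le _) 1)
      obtain ⟨e⟩ : Nonempty (ι ↪ Fin d) :=
        Function.Embedding.nonempty_iff_card_le.mpr hcard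
      set w' : Fin d → ℝ := Function.extend e w 0 with hw'
      set z' : Fin d → Eucl n := Function.extend e z fun _ => p₀ with hz'
      have hwe : ∀ i, w' (e i) = w i := fun i => e.injective.extend_apply w 0 i
      have hze : ∀ i, z' (e i) = z i := fun i => e.injective.extend_apply z _ i
      have hw'0 : ∀ j, (¬ ∃ i, e i = j) → w' j = 0 := fun j hj => by
        rw [hw', Function.extend_apply' _ _ _ hj]; rfl
      refine ⟨(w', z'), ⟨⟨fun j => ?_, ?_⟩, fun j _ => ?_⟩, ?_⟩
      · show 0 ≤ w' j
        rcases em (∃ i, e i = j) with ⟨i, rfl⟩ | hj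
        · rw [hwe]; exact (hwpos i).le
        · rw [hw'0 j hj]
      · show ∑ j, w' j = 1
        rw [sum_extend_emb e w' hw'0]
        simpa [hwe] using hwsum
      · show z' j ∈ s
        rcases em (∃ i, e i = j) with ⟨i, rfl⟩ | hj
        · rw [hze]; exact hrange ⟨i, rfl⟩
        · rw [hz', Function.extend_apply' _ _ _ hj]; exact hp₀
      · show ∑ j, w' j • z' j = x
        have heq2 : ∑ j, w' j • z' j = ∑ i, w i • z i := by
          rw [sum_extend_emb e (fun j => w' j • z' j)
            (fun j hj => by show w' j • z' j = 0; rw [hw'0 j hj, zero_smul])]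
          simp only [hwe, hze]
        rw [heq2]; exact hsum
    · rintro x ⟨⟨w, z⟩, ⟨⟨hw0, hw1⟩, hzs⟩, rfl⟩
      exact (convex_convexHull ℝ s).sum_mem (fun i _ => hw0 i) hw1
        (fun i _ => subset_convexHull ℝ s (hzs i (Set.mem_univ i)))
  rw [himage]
  exact (((isCompact_stdSimplex ℝ (Fin d)).prod (isCompact_univ_pi fun _ => hs)).image
    (continuous_finset_sum _ fun i _ =>
      ((continuous_apply i).comp continuous_fst).smul
        ((continuous_apply i).comp continuous_snd)))

/-- a convex body in the sphere containing no pair of antipodal points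
is contained in an open hemisphere. -/
theorem convex_body_no_antipodal_in_open_hemisphere (n : ℕ) (hn : 1 ≤ n)
    (M : Set (Sphere n)) (hcpt : IsCompact M) (hint : (interior M).Nonempty)
    (hconv : SphConvexSet M)
    (hanti : ¬ ∃ p ∈ M, ∃ q ∈ M, (q : Eucl n) = -(p : Eucl n)) :
    ∃ x₀ : Sphere n, M ⊆ openHemi x₀ := by
  classical
  obtain ⟨p₀, hp₀i⟩ := hint
  have hp₀ : p₀ ∈ M := interior_subset hp₀i
  have hanti' : ∀ p ∈ M, ∀ q ∈ M, (q : Eucl n) ≠ -(p : Eucl n) := fun p hp q hq h =>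
    hanti ⟨p, hp, q, hq, h⟩
  set K := convexHull ℝ (Subtype.val '' M) with hK
  have hKcpt : IsCompact K :=
    isCompact_hull (hcpt.image continuous_subtype_val) ⟨p₀, Set.mem_image_of_mem _ hp₀⟩
  have h0K : (0 : Eucl n) ∉ K := by
    intro h0
    rw [hK, convexHull_eq] at h0
    obtain ⟨ι, t, w, z, hw0, hw1, hzM, hcm⟩ := h0
    rw [Finset.centerMass_eq_of_sum_1 _ _ hw1] at hcm
    obtain ⟨r, hr, tt, htt, heq⟩ := sum_point hconv hanti' t w z hw0
      (fun i hi => by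
        obtain ⟨m, hm, hmz⟩ := hzM i hi
        exact ⟨m, hm, hmz⟩)
      (by rw [hw1]; norm_num)
    rw [hcm] at heq
    have hrn : ‖(r : Eucl n)‖ = 1 := sphere_norm r
    have := congrArg norm heq
    rw [norm_zero, norm_smul, hrn, mul_one, Real.norm_eq_abs, abs_of_pos htt] at this
    linarith
  obtain ⟨f, u, hfu, hub⟩ :=
    geometric_hahn_banach_point_closed (convex_convexHull ℝ _) hKcpt.isClosed h0K
  have hu : 0 < u := by simpa using hfu
  set wv := (InnerProductSpace.toDual ℝ (Eucl n)).symm f with hwv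
  have hwv' : ∀ y, ⟪wv, y⟫ = f y := fun y => InnerProductSpace.toDual_symm_apply
  have hMpos : ∀ p ∈ M, 0 < ⟪wv, (p : Eucl n)⟫ := by
    intro p hp
    rw [hwv']
    exact lt_trans hu (hub _ (subset_convexHull ℝ _ (Set.mem_image_of_mem _ hp)))
  have hwvne : wv ≠ 0 := by
    intro h
    have := hMpos p₀ hp₀
    rw [h, inner_zero_left] at this
    exact lt_irrefl 0 this
  refine ⟨⟨‖wv‖⁻¹ • wv, mem_sphere_zero_iff_norm.mpr (norm_smul_inv_norm hwvne)⟩, ?_⟩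
  intro p hp
  show 0 < ⟪(p : Eucl n), ‖wv‖⁻¹ • wv⟫
  rw [real_inner_smul_right, real_inner_comm]
  exact mul_pos (inv_pos.mpr (norm_pos_iff.mpr hwvne)) (hMpos p hp)
end
end

section
/- Let F : Γ₊ → ℝ be twice continuously differentiable, symmetric, strictly monotone, convex, positively homogeneous of degree 1, with F(1,…,1) > 0. Then for all κ ∈ Γ₊: F(κ) ≥ (F(1,…,1)/n)·∑_{i=1}^n κ_i and ∑_{i=1}^n ∂F/∂κ_i(κ) ≤ F(1,…,1). -/
noncomputable section

/-- The open positive cone `Γ₊ ⊆ ℝⁿ`. -/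
def GammaPlus (n : ℕ) : Set (Fin n → ℝ) := {κ | ∀ i, 0 < κ i}

lemma gammaPlus_isOpen (n : ℕ) : IsOpen (GammaPlus n) := by
  have : GammaPlus n = Set.pi Set.univ (fun _ : Fin n => Set.Ioi (0:ℝ)) := by
    ext κ; simp [GammaPlus, Set.mem_pi]
  rw [this]
  exact isOpen_set_pi Set.finite_univ (fun _ _ => isOpen_Ioi)

/-- a symmetric, strictly monotone, convex, 1-homogeneous `C²`
curvature function `F` on `Γ₊` with `F(1,…,1) > 0` satisfies
`F(κ) ≥ (F(1,…,1)/n)·∑ κ_i` and `∑ᵢ ∂F/∂κᵢ(κ) ≤ F(1,…,1)`. -/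
theorem convex_curvature_function_inequalities (n : ℕ) (F : (Fin n → ℝ) → ℝ)
    (hreg : ContDiffOn ℝ 2 F (GammaPlus n))
    (hsym : ∀ π : Equiv.Perm (Fin n), ∀ κ ∈ GammaPlus n, F (κ ∘ π) = F κ)
    (hmono : ∀ κ ∈ GammaPlus n, ∀ i : Fin n, 0 < fderiv ℝ F κ (Pi.single i 1))
    (hconv : ConvexOn ℝ (GammaPlus n) F)
    (hhom : ∀ κ ∈ GammaPlus n, ∀ c : ℝ, 0 < c → F (c • κ) = c * F κ)
    (hpos : 0 < F (fun _ => 1)) :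
    ∀ κ ∈ GammaPlus n, F (fun _ => 1) / n * ∑ i, κ i ≤ F κ ∧
      ∑ i, fderiv ℝ F κ (Pi.single i 1) ≤ F (fun _ => 1) := by
  intro κ hκ
  set v : Fin n → ℝ := fun _ => (1:ℝ) with hv
  have hvmem : v ∈ GammaPlus n := fun i => one_pos
  -- subadditivity
  have hsub : ∀ x ∈ GammaPlus n, ∀ y ∈ GammaPlus n, F (x + y) ≤ F x + F y := by
    intro x hx y hy
    have hmid : F ((1/2 : ℝ) • x + (1/2 : ℝ) • y) ≤ (1/2) * F x + (1/2) * F y :=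
      hconv.2 hx hy (by norm_num) (by norm_num) (by norm_num)
    have hmidmem : (1/2 : ℝ) • x + (1/2 : ℝ) • y ∈ GammaPlus n := by
      intro i
      have := hx i; have := hy i
      simp only [Pi.add_apply, Pi.smul_apply, smul_eq_mul]
      nlinarith [hx i, hy i]
    have h2 : F ((2:ℝ) • ((1/2 : ℝ) • x + (1/2 : ℝ) • y)) =
        2 * F ((1/2 : ℝ) • x + (1/2 : ℝ) • y) := hhom _ hmidmem 2 (by norm_num)
    have hxy : (2:ℝ) • ((1/2 : ℝ) • x + (1/2 : ℝ) • y) = x + y := by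
      funext i; simp; ring
    rw [hxy] at h2
    linarith
  constructor
  · -- first inequality
    rcases Nat.eq_zero_or_pos n with hn | hn
    · subst hn
      have : κ = v := funext (fun i => Fin.elim0 i)
      rw [this]
      simp only [Finset.univ_eq_empty, Finset.sum_empty, mul_zero]
      exact le_of_lt hpos
    · haveI : NeZero n := ⟨hn.ne'⟩
      set σ := F (fun _ => 1) with hσ
      set m : ℝ := (∑ i, κ i) / n with hm
      have hmpos : 0 < m := by
        have : 0 < ∑ i, κ i :=
          Finset.sum_pos (fun i _ => hκ i) (Finset.univ_nonempty)
        positivity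
      -- Jensen over the cyclic shifts
      have hJ : F (∑ k : Fin n, ((n:ℝ)⁻¹) • (κ ∘ (Equiv.addRight k))) ≤
          ∑ k : Fin n, ((n:ℝ)⁻¹) * F (κ ∘ (Equiv.addRight k)) := by
        apply hconv.map_sum_le
        · intro k _; positivity
        · simp [Finset.sum_const, Finset.card_univ]
        · intro k _
          intro i
          exact hκ _
      have hsumval : (∑ k : Fin n, ((n:ℝ)⁻¹) • (κ ∘ (Equiv.addRight k))) = m • v := by
        funext j
        simp only [Finset.sum_apply, Pi.smul_apply, Function.comp_apply, smul_eq_mul,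
          Equiv.coe_addRight, hv, hm]
        rw [← Finset.mul_sum]
        have : ∑ k : Fin n, κ (j + k) = ∑ i, κ i :=
          Fintype.sum_equiv (Equiv.addLeft j) _ _ (fun k => rfl)
        rw [this]
        field_simp
      have hRHS : ∑ k : Fin n, ((n:ℝ)⁻¹) * F (κ ∘ (Equiv.addRight k)) = F κ := by
        have : ∀ k : Fin n, F (κ ∘ (Equiv.addRight k)) = F κ := fun k =>
          hsym (Equiv.addRight k) κ hκ
        simp only [this, Finset.sum_const, Finset.card_univ, Fintype.card_fin,
          nsmul_eq_mul]
        field_simp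
      rw [hsumval, hRHS] at hJ
      have hFm : F (m • v) = m * σ := hhom v hvmem m hmpos
      rw [hFm] at hJ
      calc σ / n * ∑ i, κ i = m * σ := by rw [hm]; ring
        _ ≤ F κ := hJ
  · -- second inequality
    have hdiff : DifferentiableAt ℝ F κ := by
      have := (hreg.contDiffAt ((gammaPlus_isOpen n).mem_nhds hκ))
      exact this.differentiableAt (by norm_num)
    have hF : HasFDerivAt F (fderiv ℝ F κ) κ := hdiff.hasFDerivAt
    set σ := F (fun _ => 1) with hσ
    set D : ℝ := fderiv ℝ F κ v with hD
    have hsingle : ∑ i, fderiv ℝ F κ (Pi.single i 1) = D := by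
      rw [hD, ← map_sum]
      congr 1
      funext j
      simp [Finset.sum_apply, Pi.single_apply, hv]
    rw [hsingle]
    -- g s = F (κ + s • v) has derivative D at 0
    have hline : HasDerivAt (fun s : ℝ => κ + s • v) v 0 := by
      have h1 : HasDerivAt (fun s : ℝ => s • v) ((1:ℝ) • v) 0 :=
        (hasDerivAt_id 0).smul_const v
      rw [one_smul] at h1
      exact h1.const_add κ
    have hg : HasDerivAt (fun s : ℝ => F (κ + s • v)) D 0 := by
      have hF' : HasFDerivAt F (fderiv ℝ F κ) (κ + (0:ℝ) • v) := by simpa using hF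
      have := hF'.comp_hasDerivAt 0 hline
      exact this
    have htend : Filter.Tendsto (slope (fun s : ℝ => F (κ + s • v)) 0)
        (nhdsWithin 0 (Set.Ioi 0)) (nhds D) := by
      have := hasDerivAt_iff_tendsto_slope.1 hg
      exact this.mono_left (nhdsWithin_mono 0 (fun s hs => ne_of_gt hs))
    refine le_of_tendsto htend ?_
    filter_upwards [self_mem_nhdsWithin] with s hs
    have hspos : (0:ℝ) < s := hs
    have hsvmem : s • v ∈ GammaPlus n := fun i => by simpa [hv] using hspos
    have hbound : F (κ + s • v) ≤ F κ + s * σ := by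
      have := hsub κ hκ (s • v) hsvmem
      have h2 : F (s • v) = s * σ := hhom v hvmem s hspos
      rw [h2] at this
      exact this
    have : slope (fun s : ℝ => F (κ + s • v)) 0 s =
        (F (κ + s • v) - F (κ + (0:ℝ) • v)) / s := by
      simp [slope_def_field]
    rw [this]
    have h0 : F (κ + (0:ℝ) • v) = F κ := by norm_num
    rw [h0, div_le_iff₀ hspos]
    nlinarith
end
end
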